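/- For every k ≥ 1, t_3(k) ≺ t_4(k+1), where t_3(k) = b·TM_{2k+1}·complement(TM_{2k})' and t_4(k) = b·TM_{2k}; consequently every one of the twelve words t_ℓ(k) (ℓ ∈ [1,12]) is lexicographically strictly smaller than every t_{ℓ'}(k+1). -/

import Mathlib

/-- Alphabet {a,b} with a = false, b = true, a < b. -/
abbrev Letter := Bool

/-- Lexicographic order (proper prefixes are smaller). -/
def lexlt (x y : List Bool) : Prop := List.Lex (· < ·) x y

/-- Fibonacci words: F 0 = b, F 1 = a, F (k+2) = F (k+1) ++ F k. -/
def Fib : ℕ → List Bool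
  | 0 => [true]
  | 1 => [false]
  | (k+2) => Fib (k+1) ++ Fib k

/-- bitwise complement -/
def comp (w : List Bool) : List Bool := w.map (fun c => !c)

/-- Thue-Morse words: TM 0 = a, TM (k+1) = TM k ++ comp (TM k). -/
def TM : ℕ → List Bool
  | 0 => [false]
  | (k+1) => TM k ++ comp (TM k)

/-- Fueled Nyldon predicate: a string of length 1 is Nyldon; a longer string is
Nyldon iff it admits no factorization into ≥ 2 Nyldon words in lexicographically
non-decreasing order. -/
def NyldonAux : ℕ → List Bool → Prop
  | 0, _ => False
  | (n+1), w =>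
    w.length = 1 ∨ (1 < w.length ∧
      ¬ ∃ fs : List (List Bool), 2 ≤ fs.length ∧ fs.flatten = w ∧
        fs.Chain' lexlt ∧ ∀ u ∈ fs, NyldonAux n u)

def Nyldon (w : List Bool) : Prop := NyldonAux w.length w

/-- H k = Fib k with its first letter removed. -/
def H (k : ℕ) : List Bool := (Fib k).tail

/-- s is the longest Nyldon proper suffix of w. -/
def IsLnps (w s : List Bool) : Prop :=
  s <:+ w ∧ s ≠ w ∧ Nyldon s ∧
    ∀ t : List Bool, t <:+ w → t ≠ w → Nyldon t → t.length ≤ s.length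

/-- Thue-Morse morphism: τ(a)=ab, τ(b)=ba. -/
def tau (w : List Bool) : List Bool :=
  w.flatMap (fun c => if c then [true, false] else [false, true])

/-- The sequence w_n: w_1=a, w_2=b, w_3=ba, w_4=baabbaa,
w_n = b·TM_{2n-8}·comp(TM_{2n-6})·comp(TM_{2n-6})' for n ≥ 5. -/
def wseq : ℕ → List Bool
  | 0 => []
  | 1 => [false]
  | 2 => [true]
  | 3 => [true, false]
  | 4 => [true, false, false, true, true, false, false]
  | (n+5) => true :: (TM (2*n+2) ++ comp (TM (2*n+4)) ++ (comp (TM (2*n+4))).dropLast)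

/-- The twelve words t_i(k). -/
def tword : ℕ → ℕ → List Bool
  | 1, k => true :: (TM (2*k+1)).dropLast
  | 2, k => true :: TM (2*k+1)
  | 3, k => true :: (TM (2*k+1) ++ (comp (TM (2*k))).dropLast)
  | 4, k => true :: TM (2*k)
  | 5, k => true :: (TM (2*k) ++ TM (2*k-1) ++ (comp (TM (2*k-2))).dropLast)
  | 6, k => true :: (TM (2*k) ++ (TM (2*k+1)).dropLast)
  | 7, k => true :: (TM (2*k) ++ TM (2*k+1))
  | 8, k => true :: (TM (2*k) ++ TM (2*k+1) ++ (comp (TM (2*k))).dropLast)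
  | 9, k => true :: (TM (2*k) ++ (comp (TM (2*k+2))).dropLast)
  | 10, k => true :: (TM (2*k) ++ comp (TM (2*k+2)))
  | 11, k => true :: (TM (2*k) ++ TM (2*k+1) ++ (comp (TM (2*k+2))).dropLast)
  | 12, k => true :: (TM (2*k) ++ comp (TM (2*k+2)) ++ (comp (TM (2*k+2))).dropLast)
  | _, _ => []

-- ### Auxiliary lemmas

lemma comp_append (x y : List Bool) : comp (x ++ y) = comp x ++ comp y := by
  simp [comp]

lemma comp_comp (x : List Bool) : comp (comp x) = x := by
  simp [comp, Function.comp_def]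

lemma TM_succ (n : ℕ) : TM (n+1) = TM n ++ comp (TM n) := rfl

lemma comp_TM_succ (n : ℕ) : comp (TM (n+1)) = comp (TM n) ++ TM n := by
  rw [TM_succ, comp_append, comp_comp]

lemma TM_two (n : ℕ) : TM (n+2) = TM n ++ (comp (TM n) ++ (comp (TM n) ++ TM n)) := by
  show TM (n+1) ++ comp (TM (n+1)) = _
  rw [TM_succ n, comp_append, comp_comp]
  simp

lemma TM_cons (n : ℕ) : ∃ r, TM n = false :: r := by
  induction n with
  | zero => exact ⟨[], rfl⟩
  | succ n ih =>
    obtain ⟨r, hr⟩ := ih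
    exact ⟨r ++ comp (TM n), by rw [TM_succ n]; simp [hr]⟩

lemma TM_ne_nil (n : ℕ) : TM n ≠ [] := by
  obtain ⟨r, hr⟩ := TM_cons n; simp [hr]

lemma compTM_cons (n : ℕ) : ∃ r, comp (TM n) = true :: r := by
  obtain ⟨r, hr⟩ := TM_cons n
  exact ⟨comp r, by rw [hr]; simp [comp]⟩

lemma comp_TM_ne_nil (n : ℕ) : comp (TM n) ≠ [] := by
  obtain ⟨r, hr⟩ := compTM_cons n; simp [hr]

lemma dropLast_app (x : List Bool) {y : List Bool} (h : y ≠ []) :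
    (x ++ y).dropLast = x ++ y.dropLast := by
  conv_lhs => rw [← List.dropLast_append_getLast h]
  rw [← List.append_assoc, List.dropLast_concat]

lemma lexlt_append (x : List Bool) {t : List Bool} (h : t ≠ []) : lexlt x (x ++ t) := by
  induction x with
  | nil =>
    cases t with
    | nil => exact absurd rfl h
    | cons a t => exact List.Lex.nil
  | cons a x ih => exact List.Lex.cons ih

lemma lexlt_mid (p r s : List Bool) : lexlt (p ++ false :: r) (p ++ true :: s) := by
  induction p with
  | nil => exact List.Lex.rel (by decide)
  | cons a p ih => exact List.Lex.cons ih

lemma lexlt_mid2 {x y : List Bool} (p u v : List Bool)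
    (hu : ∃ a, u = false :: a) (hv : ∃ b, v = true :: b)
    (hx : x = p ++ u) (hy : y = p ++ v) : lexlt x y := by
  obtain ⟨a, rfl⟩ := hu
  obtain ⟨b, rfl⟩ := hv
  subst hx hy
  exact lexlt_mid p a b

lemma cons_head_app {c : Bool} {u : List Bool} (h : ∃ a, u = c :: a) (X : List Bool) :
    ∃ a, u ++ X = c :: a := by
  obtain ⟨a, rfl⟩ := h
  exact ⟨a ++ X, by simp⟩

lemma lexlt_dropLast_ext (x : List Bool) {y : List Bool} (z : List Bool) (hy : y ≠ []) :
    lexlt (x ++ y.dropLast) (x ++ (y ++ z)) := by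
  conv_rhs => rw [← List.dropLast_append_getLast hy]
  have h : x ++ ((y.dropLast ++ [y.getLast hy]) ++ z)
      = (x ++ y.dropLast) ++ ([y.getLast hy] ++ z) := by simp
  rw [h]
  exact lexlt_append _ (by simp)

lemma lexlt_ext {x y z : List Bool} (h : lexlt x y) (hp : y <+: z) : lexlt x z := by
  obtain ⟨t, rfl⟩ := hp
  induction h with
  | nil => exact List.Lex.nil
  | rel h => exact List.Lex.rel h
  | @cons a l₁ l₂ h ih => exact List.Lex.cons ih

theorem stmt19 : ∀ k : ℕ, 1 ≤ k →
    lexlt (tword 3 k) (tword 4 (k+1)) ∧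
    ∀ l l' : ℕ, 1 ≤ l → l ≤ 12 → 1 ≤ l' → l' ≤ 12 →
      lexlt (tword l k) (tword l' (k+1)) := by
  intro k hk
  obtain ⟨m, rfl⟩ : ∃ m, k = m + 1 := ⟨k - 1, by omega⟩
  obtain ⟨a, ha⟩ := TM_cons (2*m+2)
  obtain ⟨b, hb⟩ := compTM_cons (2*m+2)
  -- expansion of comp (TM (2m+4))
  have hc4 : comp (TM (2*m+2+2))
      = comp (TM (2*m+2)) ++ (TM (2*m+2) ++ (TM (2*m+2) ++ comp (TM (2*m+2)))) := by
    rw [TM_two, comp_append, comp_append, comp_append, comp_comp]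
  have hd : (comp (TM (2*m+2+2))).dropLast
      = comp (TM (2*m+2)) ++ (TM (2*m+2) ++ (TM (2*m+2) ++ (comp (TM (2*m+2))).dropLast)) := by
    rw [hc4, dropLast_app, dropLast_app, dropLast_app]
    · exact comp_TM_ne_nil _
    · simp [TM_ne_nil, comp_TM_ne_nil]
    · simp [TM_ne_nil, comp_TM_ne_nil]
  have hy1 : true :: TM (2*m+2+2)
      = (true :: TM (2*m+2)) ++ (comp (TM (2*m+2)) ++ (comp (TM (2*m+2)) ++ TM (2*m+2))) := by
    rw [TM_two]; simp
  have hy2 : true :: TM (2*m+2+2)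
      = (true :: (TM (2*m+2) ++ comp (TM (2*m+2)))) ++ (comp (TM (2*m+2)) ++ TM (2*m+2)) := by
    rw [TM_two]; simp
  have c1 : ∀ l : ℕ, 1 ≤ l → l ≤ 12 → lexlt (tword l (m+1)) (true :: TM (2*m+2+2)) := by
    intro l h1 h2
    interval_cases l
    · -- l = 1
      show lexlt ([true] ++ (TM (2*m+2+1)).dropLast) ([true] ++ TM (2*m+2+1+1))
      conv_rhs => rw [TM_succ (2*m+2+1)]
      exact lexlt_dropLast_ext [true] (comp (TM (2*m+2+1))) (TM_ne_nil _)
    · -- l = 2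
      show lexlt (true :: TM (2*m+2+1)) (true :: TM (2*m+2+1+1))
      have h : true :: TM (2*m+2+1+1)
          = (true :: TM (2*m+2+1)) ++ comp (TM (2*m+2+1)) := by
        rw [TM_succ (2*m+2+1)]; simp
      rw [h]
      exact lexlt_append _ (comp_TM_ne_nil _)
    · -- l = 3
      show lexlt (true :: (TM (2*m+2+1) ++ (comp (TM (2*m+2))).dropLast))
        (true :: TM (2*m+2+1+1))
      have h : true :: TM (2*m+2+1+1)
          = (true :: TM (2*m+2+1)) ++ (comp (TM (2*m+2)) ++ TM (2*m+2)) := by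
        rw [TM_succ (2*m+2+1), comp_TM_succ]; simp
      rw [h]
      exact lexlt_dropLast_ext (true :: TM (2*m+2+1)) (TM (2*m+2)) (comp_TM_ne_nil _)
    · -- l = 4
      show lexlt (true :: TM (2*m+2)) (true :: TM (2*m+2+2))
      rw [hy1]
      exact lexlt_append _ (by simp [comp_TM_ne_nil])
    · -- l = 5
      obtain ⟨a5, ha5⟩ := TM_cons (2*m+1)
      exact lexlt_mid2 (true :: TM (2*m+2))
        (TM (2*m+1) ++ (comp (TM (2*m))).dropLast)
        (comp (TM (2*m+2)) ++ (comp (TM (2*m+2)) ++ TM (2*m+2)))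
        (cons_head_app ⟨a5, ha5⟩ _) (cons_head_app ⟨b, hb⟩ _)
        (by show true :: (TM (2*m+2) ++ TM (2*m+1) ++ (comp (TM (2*m))).dropLast) = _; simp)
        hy1
    · -- l = 6
      have h6 : (TM (2*m+2+1)).dropLast = TM (2*m+2) ++ (comp (TM (2*m+2))).dropLast := by
        rw [TM_succ (2*m+2), dropLast_app]
        exact comp_TM_ne_nil _
      exact lexlt_mid2 (true :: TM (2*m+2))
        (TM (2*m+2) ++ (comp (TM (2*m+2))).dropLast)
        (comp (TM (2*m+2)) ++ (comp (TM (2*m+2)) ++ TM (2*m+2)))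
        (cons_head_app ⟨a, ha⟩ _) (cons_head_app ⟨b, hb⟩ _)
        (by show true :: (TM (2*m+2) ++ (TM (2*m+2+1)).dropLast) = _; rw [h6]; simp)
        hy1
    · -- l = 7
      exact lexlt_mid2 (true :: TM (2*m+2))
        (TM (2*m+2+1))
        (comp (TM (2*m+2)) ++ (comp (TM (2*m+2)) ++ TM (2*m+2)))
        (by rw [TM_succ (2*m+2)]; exact cons_head_app ⟨a, ha⟩ _) (cons_head_app ⟨b, hb⟩ _)
        (by show true :: (TM (2*m+2) ++ TM (2*m+2+1)) = _; simp)
        hy1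
    · -- l = 8
      exact lexlt_mid2 (true :: TM (2*m+2))
        (TM (2*m+2+1) ++ (comp (TM (2*m+2))).dropLast)
        (comp (TM (2*m+2)) ++ (comp (TM (2*m+2)) ++ TM (2*m+2)))
        (by rw [TM_succ (2*m+2)]; exact cons_head_app (cons_head_app ⟨a, ha⟩ _) _)
        (cons_head_app ⟨b, hb⟩ _)
        (by show true :: (TM (2*m+2) ++ TM (2*m+2+1) ++ (comp (TM (2*m+2))).dropLast) = _; simp)
        hy1
    · -- l = 9
      exact lexlt_mid2 (true :: (TM (2*m+2) ++ comp (TM (2*m+2))))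
        (TM (2*m+2) ++ (TM (2*m+2) ++ (comp (TM (2*m+2))).dropLast))
        (comp (TM (2*m+2)) ++ TM (2*m+2))
        (cons_head_app ⟨a, ha⟩ _) (cons_head_app ⟨b, hb⟩ _)
        (by show true :: (TM (2*m+2) ++ (comp (TM (2*m+2+2))).dropLast) = _; rw [hd]; simp)
        hy2
    · -- l = 10
      exact lexlt_mid2 (true :: (TM (2*m+2) ++ comp (TM (2*m+2))))
        (TM (2*m+2) ++ (TM (2*m+2) ++ comp (TM (2*m+2))))
        (comp (TM (2*m+2)) ++ TM (2*m+2))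
        (cons_head_app ⟨a, ha⟩ _) (cons_head_app ⟨b, hb⟩ _)
        (by show true :: (TM (2*m+2) ++ comp (TM (2*m+2+2))) = _; rw [hc4]; simp)
        hy2
    · -- l = 11
      exact lexlt_mid2 (true :: TM (2*m+2))
        (TM (2*m+2+1) ++ (comp (TM (2*m+2+2))).dropLast)
        (comp (TM (2*m+2)) ++ (comp (TM (2*m+2)) ++ TM (2*m+2)))
        (by rw [TM_succ (2*m+2)]; exact cons_head_app (cons_head_app ⟨a, ha⟩ _) _)
        (cons_head_app ⟨b, hb⟩ _)
        (by show true :: (TM (2*m+2) ++ TM (2*m+2+1) ++ (comp (TM (2*m+2+2))).dropLast) = _; simp)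
        hy1
    · -- l = 12
      exact lexlt_mid2 (true :: (TM (2*m+2) ++ comp (TM (2*m+2))))
        (TM (2*m+2) ++ (TM (2*m+2) ++ (comp (TM (2*m+2)) ++
          (comp (TM (2*m+2)) ++ (TM (2*m+2) ++ (TM (2*m+2) ++ comp (TM (2*m+2))))).dropLast)))
        (comp (TM (2*m+2)) ++ TM (2*m+2))
        (cons_head_app ⟨a, ha⟩ _) (cons_head_app ⟨b, hb⟩ _)
        (by
          show true :: (TM (2*m+2) ++ comp (TM (2*m+2+2)) ++ (comp (TM (2*m+2+2))).dropLast) = _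
          rw [hc4]; simp)
        hy2
  have c2 : ∀ l' : ℕ, 1 ≤ l' → l' ≤ 12 →
      (true :: TM (2*m+2+2)) <+: tword l' (m+2) := by
    intro l' h1 h2
    interval_cases l'
    · -- l' = 1
      show (true :: TM (2*m+2+2)) <+: (true :: (TM (2*m+2+2+1)).dropLast)
      refine ⟨(comp (TM (2*m+2+2))).dropLast, ?_⟩
      rw [TM_succ (2*m+2+2), dropLast_app]
      · simp
      · exact comp_TM_ne_nil _
    · -- l' = 2
      show (true :: TM (2*m+2+2)) <+: (true :: TM (2*m+2+2+1))
      exact ⟨comp (TM (2*m+2+2)), by rw [TM_succ (2*m+2+2)]; simp⟩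
    · -- l' = 3
      show (true :: TM (2*m+2+2)) <+:
        (true :: (TM (2*m+2+2+1) ++ (comp (TM (2*m+2+2))).dropLast))
      exact ⟨comp (TM (2*m+2+2)) ++ (comp (TM (2*m+2+2))).dropLast,
        by rw [TM_succ (2*m+2+2)]; simp⟩
    · -- l' = 4
      show (true :: TM (2*m+2+2)) <+: (true :: TM (2*m+2+2))
      exact List.prefix_rfl
    · -- l' = 5
      show (true :: TM (2*m+2+2)) <+:
        (true :: (TM (2*m+2+2) ++ TM (2*m+2+1) ++ (comp (TM (2*m+2))).dropLast))
      exact ⟨TM (2*m+2+1) ++ (comp (TM (2*m+2))).dropLast, by simp⟩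
    · -- l' = 6
      show (true :: TM (2*m+2+2)) <+:
        (true :: (TM (2*m+2+2) ++ (TM (2*m+2+2+1)).dropLast))
      exact ⟨(TM (2*m+2+2+1)).dropLast, by simp⟩
    · -- l' = 7
      show (true :: TM (2*m+2+2)) <+: (true :: (TM (2*m+2+2) ++ TM (2*m+2+2+1)))
      exact ⟨TM (2*m+2+2+1), by simp⟩
    · -- l' = 8
      show (true :: TM (2*m+2+2)) <+:
        (true :: (TM (2*m+2+2) ++ TM (2*m+2+2+1) ++ (comp (TM (2*m+2+2))).dropLast))
      exact ⟨TM (2*m+2+2+1) ++ (comp (TM (2*m+2+2))).dropLast, by simp⟩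
    · -- l' = 9
      show (true :: TM (2*m+2+2)) <+:
        (true :: (TM (2*m+2+2) ++ (comp (TM (2*m+2+2+2))).dropLast))
      exact ⟨(comp (TM (2*m+2+2+2))).dropLast, by simp⟩
    · -- l' = 10
      show (true :: TM (2*m+2+2)) <+: (true :: (TM (2*m+2+2) ++ comp (TM (2*m+2+2+2))))
      exact ⟨comp (TM (2*m+2+2+2)), by simp⟩
    · -- l' = 11
      show (true :: TM (2*m+2+2)) <+:
        (true :: (TM (2*m+2+2) ++ TM (2*m+2+2+1) ++ (comp (TM (2*m+2+2+2))).dropLast))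
      exact ⟨TM (2*m+2+2+1) ++ (comp (TM (2*m+2+2+2))).dropLast, by simp⟩
    · -- l' = 12
      show (true :: TM (2*m+2+2)) <+:
        (true :: (TM (2*m+2+2) ++ comp (TM (2*m+2+2+2)) ++ (comp (TM (2*m+2+2+2))).dropLast))
      exact ⟨comp (TM (2*m+2+2+2)) ++ (comp (TM (2*m+2+2+2))).dropLast, by simp⟩
  constructor
  · exact lexlt_ext (c1 3 (by norm_num) (by norm_num)) (c2 4 (by norm_num) (by norm_num))
  · intro l l' h1 h2 h3 h4
    exact lexlt_ext (c1 l h1 h2) (c2 l' h3 h4)
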